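/- Let G be a group, c : G → G → ℝ a two-cocycle (c(g,h) − c(f*g, h) + c(f, g*h) − c(f,g) = 0 for all f, g, h), S a set of elements of G, and C ∈ ℝ a constant with |c(s,k)| ≤ C for all s ∈ S and k ∈ G. Then for every nonempty list l of elements of S and every h ∈ G, |c(l.prod, h)| ≤ 2·C·(l.length). (In particular, for a group generated by S, the function |·|_c is Lipschitz with respect to the word length: |g|_c ≤ 2·C·|g|_S.) -/

import Mathlib

/-- Let `c` be a two-cocycle on `G` and `S ⊆ G` with `|c(s,k)| ≤ C` for all `s ∈ S`,
`k ∈ G`.  Then for every nonempty list `l` of elements of `S` and every `h ∈ G`,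
`|c(l.prod, h)| ≤ 2·C·(l.length)`.  In particular, for a group generated by `S`, the
function `|·|_c` is Lipschitz with respect to the word length. -/
theorem cocycle_norm_lipschitz_word_length {G : Type*} [Group G] (c : G → G → ℝ)
    (hcoc : ∀ f g h : G, c g h - c (f * g) h + c f (g * h) - c f g = 0)
    (S : Set G) (C : ℝ)
    (hC : ∀ s ∈ S, ∀ k : G, |c s k| ≤ C)
    (l : List G) (hl : ∀ s ∈ l, s ∈ S) (hne : l ≠ []) (h : G) :
    |c l.prod h| ≤ 2 * C * l.length := by
  induction l generalizing h with
  | nil => exact absurd rfl hne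
  | cons s t ih =>
    have hsS : s ∈ S := hl s List.mem_cons_self
    have hC0 : 0 ≤ C := (abs_nonneg _).trans (hC s hsS 1)
    rcases eq_or_ne t [] with rfl | hτ
    · simp only [List.prod_cons, List.prod_nil, mul_one, List.length_cons,
        List.length_nil]
      calc |c s h| ≤ C := hC s hsS h
        _ ≤ 2 * C * (0 + 1 : ℕ) := by push_cast; linarith
    · have ht : ∀ x ∈ t, x ∈ S := fun x hx => hl x (List.mem_cons_of_mem s hx)
      have key := hcoc s t.prod h
      have h1 : c (s * t.prod) h = c t.prod h + c s (t.prod * h) - c s t.prod := by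
        linarith
      have := ih ht hτ h
      have h2 : |c s (t.prod * h)| ≤ C := hC s hsS _
      have h3 : |c s t.prod| ≤ C := hC s hsS _
      simp only [List.prod_cons, List.length_cons, h1]
      have habs : |c t.prod h + c s (t.prod * h) - c s t.prod|
          ≤ |c t.prod h| + |c s (t.prod * h)| + |c s t.prod| := by
        calc |c t.prod h + c s (t.prod * h) - c s t.prod|
            ≤ |c t.prod h + c s (t.prod * h)| + |c s t.prod| := abs_sub _ _
          _ ≤ |c t.prod h| + |c s (t.prod * h)| + |c s t.prod| := by
              have := abs_add_le (c t.prod h) (c s (t.prod * h)); linarith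
      push_cast
      push_cast at this
      linarith
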